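/- Let β ≥ 2 and let f : ℝ → ℂ be a Schwartz function. Then ‖x ↦ -f''(x) + |x|^β·f(x)‖² = ‖f''‖² + ‖x ↦ |x|^β·f(x)‖² + 2·‖x ↦ |x|^{β/2}·f'(x)‖² − β(β−1)·‖x ↦ |x|^{(β−2)/2}·f(x)‖². -/

import Mathlib

open MeasureTheory Complex Filter

local notation "conj'" => starRingEnd ℂ

lemma abs_rpow_eq_sq (p : ℝ) (x : ℝ) : |x| ^ p = (x ^ 2 : ℝ) ^ (p / 2) := by
  rw [← _root_.sq_abs x, ← Real.rpow_natCast |x| 2, ← Real.rpow_mul (abs_nonneg x)]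
  ring_nf

lemma hasDerivAt_V {β : ℝ} (hβ : 2 ≤ β) (x : ℝ) :
    HasDerivAt (fun y : ℝ => |y| ^ β) (β * |x| ^ (β - 2) * x) x := by
  have h1 : HasDerivAt (fun y : ℝ => y ^ 2) (2 * x) x := by
    simpa [mul_comm] using (hasDerivAt_pow 2 x)
  have h2 := h1.rpow_const (p := β / 2) (Or.inr (by linarith))
  have heq : (fun y : ℝ => ((y ^ 2 : ℝ) ^ (β / 2))) = fun y : ℝ => |y| ^ β :=
    funext fun y => (abs_rpow_eq_sq β y).symm
  rw [heq] at h2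
  convert h2 using 1
  have e : β / 2 - 1 = (β - 2) / 2 := by ring
  rw [e, ← abs_rpow_eq_sq]
  ring

lemma hasDerivAt_V' {β : ℝ} (hβ : 2 ≤ β) (x : ℝ) :
    HasDerivAt (fun y : ℝ => β * |y| ^ (β - 2) * y) (β * (β - 1) * |x| ^ (β - 2)) x := by
  have key : HasDerivAt (fun y : ℝ => |y| ^ (β - 2) * y) ((β - 1) * |x| ^ (β - 2)) x := by
    rcases eq_or_lt_of_le hβ with h2 | h2
    · subst h2
      have heq : (fun y : ℝ => |y| ^ ((2:ℝ) - 2) * y) = fun y : ℝ => y := by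
        funext y; norm_num
      rw [heq]
      norm_num
      exact hasDerivAt_id x
    · rcases eq_or_ne x 0 with rfl | hx
      · have h0 : |(0:ℝ)| ^ (β - 2) = 0 := by
          rw [abs_zero, Real.zero_rpow (by linarith)]
        rw [h0, mul_zero]
        rw [hasDerivAt_iff_tendsto_slope]
        have hcont : ContinuousAt (fun y : ℝ => |y| ^ (β - 2)) 0 := by
          have : ContinuousAt (fun z : ℝ => z ^ (β - 2)) (|0| : ℝ) :=
            Real.continuousAt_rpow_const _ _ (Or.inr (by linarith))
          exact this.comp continuous_abs.continuousAt
        have htends : Tendsto (fun y : ℝ => |y| ^ (β - 2)) (nhdsWithin 0 {(0:ℝ)}ᶜ) (nhds 0) := by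
          have := hcont.tendsto
          rw [h0] at this
          exact this.mono_left nhdsWithin_le_nhds
        apply htends.congr'
        filter_upwards [self_mem_nhdsWithin] with y hy
        have hy0 : y ≠ 0 := hy
        simp [slope_def_field, hy0, mul_div_assoc, mul_comm]
      · have hsq : (x ^ 2 : ℝ) ≠ 0 := pow_ne_zero 2 hx
        have h1 : HasDerivAt (fun y : ℝ => y ^ 2) (2 * x) x := by
          simpa [mul_comm] using (hasDerivAt_pow 2 x)
        have h2 := h1.rpow_const (p := (β - 2) / 2) (Or.inl hsq)
        have heq : (fun y : ℝ => ((y ^ 2 : ℝ) ^ ((β - 2) / 2))) = fun y : ℝ => |y| ^ (β - 2) :=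
          funext fun y => (abs_rpow_eq_sq (β - 2) y).symm
        rw [heq] at h2
        have h3 := h2.mul (hasDerivAt_id x)
        convert h3 using 1
        · rfl
        · rfl
        · rfl
        have e : (β - 2) / 2 - 1 = (β - 4) / 2 := by ring
        rw [e, ← abs_rpow_eq_sq]
        have hx' : (0:ℝ) < |x| := abs_pos.mpr hx
        have e2 : |x| ^ (β - 2) = |x| ^ (β - 4) * |x| ^ (2:ℝ) := by
          rw [← Real.rpow_add hx']; ring_nf
        have e3 : |x| ^ (2:ℝ) = x ^ 2 := by
          rw [show ((2:ℝ)) = ((2:ℕ):ℝ) by norm_num, Real.rpow_natCast, _root_.sq_abs]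
        rw [e2, e3]
        simp only [id_eq]
        ring
  have h4 := key.const_mul β
  convert h4 using 1
  · rfl
  · rfl
  · funext y; ring
  · ring

lemma schwartz_integrable_aux {E : Type*} [NormedAddCommGroup E] {F : ℝ → E}
    (hF : Continuous F) (c p : ℝ) (hc : 0 ≤ c) (hp : 0 ≤ p)
    (g h : SchwartzMap ℝ ℂ)
    (hbound : ∀ x : ℝ, ‖F x‖ ≤ c * (|x| ^ p * (‖g x‖ * ‖h x‖))) :
    Integrable F := by
  obtain ⟨C, hC⟩ : ∃ C, ∀ x, ‖h x‖ ≤ C := by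
    obtain ⟨C, -, hC⟩ := h.decay 0 0
    exact ⟨C, fun x => by simpa using hC x⟩
  have hC0 : 0 ≤ C := le_trans (norm_nonneg _) (hC 0)
  set n := ⌈p⌉₊ with hn
  have hmaj : Integrable (fun x : ℝ => c * C * (‖g x‖ + ‖x‖ ^ n * ‖g x‖)) :=
    (((g.integrable (μ := volume)).norm.add (g.integrable_pow_mul volume n)).const_mul (c * C))
  apply hmaj.mono' hF.aestronglyMeasurable
  filter_upwards with x
  refine le_trans (hbound x) ?_
  have hrp : |x| ^ p ≤ 1 + ‖x‖ ^ n := by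
    rcases le_or_gt (|x|) 1 with h1 | h1
    · have : |x| ^ p ≤ 1 := Real.rpow_le_one (abs_nonneg x) h1 hp
      have h2 : (0:ℝ) ≤ ‖x‖ ^ n := by positivity
      linarith
    · have h2 : |x| ^ p ≤ |x| ^ (n : ℝ) :=
        Real.rpow_le_rpow_of_exponent_le (le_of_lt h1) (Nat.le_ceil p)
      have h3 : |x| ^ (n : ℝ) = ‖x‖ ^ n := by
        rw [Real.rpow_natCast]; rfl
      rw [h3] at h2
      nlinarith [pow_nonneg (norm_nonneg x) n]
  have hg0 : (0:ℝ) ≤ ‖g x‖ := norm_nonneg _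
  have hh : ‖h x‖ ≤ C := hC x
  have key : |x| ^ p * (‖g x‖ * ‖h x‖) ≤ (1 + ‖x‖ ^ n) * (‖g x‖ * C) :=
    mul_le_mul hrp (mul_le_mul_of_nonneg_left hh hg0) (by positivity) (by positivity)
  calc c * (|x| ^ p * (‖g x‖ * ‖h x‖)) ≤ c * ((1 + ‖x‖ ^ n) * (‖g x‖ * C)) :=
        mul_le_mul_of_nonneg_left key hc
    _ = c * C * (‖g x‖ + ‖x‖ ^ n * ‖g x‖) := by ring

lemma L2N_sq'' (I : ℝ) (hI : 0 ≤ I) : (I ^ ((1:ℝ)/2)) ^ 2 = I := by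
  rw [← Real.rpow_natCast _ 2, ← Real.rpow_mul hI]
  norm_num

lemma norm_neg_add_sq (z w : ℂ) :
    ‖-z + w‖ ^ 2 = ‖z‖ ^ 2 + ‖w‖ ^ 2 - 2 * ((starRingEnd ℂ) w * z).re := by
  have h : ∀ u : ℂ, ‖u‖ ^ 2 = Complex.normSq u := fun u => by
    rw [Complex.sq_norm]
  simp only [h, Complex.normSq_apply, Complex.add_re, Complex.add_im, Complex.neg_re,
    Complex.neg_im, Complex.mul_re, Complex.mul_im, Complex.conj_re, Complex.conj_im]
  ring

lemma norm_triple (r : ℝ) (z w : ℂ) : ‖(r : ℂ) * conj' z * w‖ = |r| * (‖z‖ * ‖w‖) := by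
  simp [norm_mul, mul_assoc, Complex.norm_real]

/-- The `L²(ℝ)` norm of a function `f : ℝ → ℂ`. -/
noncomputable def L2N (f : ℝ → ℂ) : ℝ := (∫ x : ℝ, ‖f x‖ ^ 2) ^ ((1 : ℝ) / 2)

/-- The identity
`‖(-d²/dx² + V)f‖² = ‖f''‖² + ‖Vf‖² + 2‖V^{1/2}f'‖² − ‖(V'')^{1/2}f‖²` for `V(x) = |x|^β`. -/
theorem stmt_10 (β : ℝ) (hβ : 2 ≤ β) (f : SchwartzMap ℝ ℂ) :
    L2N (fun x : ℝ => -(deriv (deriv ⇑f) x) + ((|x| ^ β : ℝ) : ℂ) * f x) ^ 2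
      = L2N (deriv (deriv ⇑f)) ^ 2
        + L2N (fun x : ℝ => ((|x| ^ β : ℝ) : ℂ) * f x) ^ 2
        + 2 * L2N (fun x : ℝ => ((|x| ^ (β / 2) : ℝ) : ℂ) * deriv (⇑f) x) ^ 2
        - β * (β - 1) * L2N (fun x : ℝ => ((|x| ^ ((β - 2) / 2) : ℝ) : ℂ) * f x) ^ 2 := by
  have hβ0 : (0:ℝ) ≤ β := by linarith
  have hβ1 : (0:ℝ) ≤ β - 1 := by linarith
  have hβ2 : (0:ℝ) ≤ β - 2 := by linarith
  set f1 : SchwartzMap ℝ ℂ := SchwartzMap.derivCLM ℝ ℂ f with hf1def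
  set f2 : SchwartzMap ℝ ℂ := SchwartzMap.derivCLM ℝ ℂ f1 with hf2def
  have hd1 : deriv (⇑f) = ⇑f1 := funext fun x => (SchwartzMap.derivCLM_apply (𝕜 := ℝ) f x).symm
  have hd2 : deriv (⇑f1) = ⇑f2 := funext fun x => (SchwartzMap.derivCLM_apply (𝕜 := ℝ) f1 x).symm
  have hL2 : ∀ h : ℝ → ℂ, L2N h ^ 2 = ∫ x : ℝ, ‖h x‖ ^ 2 := fun h =>
    L2N_sq'' _ (integral_nonneg fun x => sq_nonneg _)
  rw [hd1, hd2, hL2, hL2, hL2, hL2, hL2]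
  -- pointwise simplification of the two weighted norms
  have key1 : ∀ (p : ℝ) (z : ℂ) (x : ℝ),
      ‖((|x| ^ (p / 2) : ℝ) : ℂ) * z‖ ^ 2 = |x| ^ p * ‖z‖ ^ 2 := by
    intro p z x
    rw [norm_mul, Complex.norm_real, Real.norm_eq_abs,
      _root_.abs_of_nonneg (Real.rpow_nonneg (abs_nonneg x) _), mul_pow,
      ← Real.rpow_natCast (|x| ^ (p / 2)) 2, ← Real.rpow_mul (abs_nonneg x)]
    norm_num
  simp only [key1]
  -- abbreviations
  set Vc : ℝ → ℂ := fun x => ((|x| ^ β : ℝ) : ℂ) with hVc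
  set V'c : ℝ → ℂ := fun x => ((β * |x| ^ (β - 2) * x : ℝ) : ℂ) with hV'c
  set Wc : ℝ → ℂ := fun x => ((β * (β - 1) * |x| ^ (β - 2) : ℝ) : ℂ) with hWc
  -- continuity facts
  have hcont_pow : ∀ p : ℝ, 0 ≤ p → Continuous fun x : ℝ => |x| ^ p := fun p hp =>
    continuous_abs.rpow_const (fun x => Or.inr hp)
  have hcV : Continuous Vc := Complex.continuous_ofReal.comp (hcont_pow β hβ0)
  have hcV' : Continuous V'c :=
    Complex.continuous_ofReal.comp ((continuous_const.mul (hcont_pow _ hβ2)).mul continuous_id)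
  have hcW : Continuous Wc :=
    Complex.continuous_ofReal.comp (continuous_const.mul (hcont_pow _ hβ2))
  have hconjf : Continuous fun x : ℝ => conj' (f x) := continuous_star.comp f.continuous
  have hconjf1 : Continuous fun x : ℝ => conj' (f1 x) := continuous_star.comp f1.continuous
  -- norm bounds on potentials
  have habsV : ∀ x : ℝ, ‖Vc x‖ ≤ 1 * |x| ^ β := fun x => by
    rw [hVc]
    simp only [Complex.norm_real, Real.norm_eq_abs, one_mul,
      _root_.abs_of_nonneg (Real.rpow_nonneg (abs_nonneg x) β)]
    exact le_refl _
  have hpow_add : ∀ x : ℝ, |x| ^ (β - 2) * |x| = |x| ^ (β - 1) := fun x => by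
    have h := Real.rpow_add' (abs_nonneg x) (show (β - 2) + 1 ≠ 0 by linarith)
    rw [Real.rpow_one] at h
    rw [← h]
    congr 1
    ring
  have habsV' : ∀ x : ℝ, ‖V'c x‖ ≤ β * |x| ^ (β - 1) := fun x => by
    rw [hV'c]
    simp only [Complex.norm_real, Real.norm_eq_abs, abs_mul,
      _root_.abs_of_nonneg (Real.rpow_nonneg (abs_nonneg x) (β - 2)),
      _root_.abs_of_nonneg hβ0]
    rw [mul_assoc, hpow_add x]
  have habsW : ∀ x : ℝ, ‖Wc x‖ ≤ (β * (β - 1)) * |x| ^ (β - 2) := fun x => by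
    rw [hWc]
    simp only [Complex.norm_real, Real.norm_eq_abs, abs_mul,
      _root_.abs_of_nonneg (Real.rpow_nonneg (abs_nonneg x) (β - 2)),
      _root_.abs_of_nonneg hβ0, _root_.abs_of_nonneg hβ1]
    exact le_refl _
  -- generic integrability of (r x) * conj (g x) * h x
  have int_c : ∀ (r : ℝ → ℂ), Continuous r → ∀ (c p : ℝ), 0 ≤ c → 0 ≤ p →
      ∀ (g h : SchwartzMap ℝ ℂ), (∀ x, ‖r x‖ ≤ c * |x| ^ p) →
      Integrable fun x : ℝ => r x * conj' (g x) * h x := by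
    intro r hr c p hc hp g h hrb
    apply schwartz_integrable_aux
      ((hr.mul (continuous_star.comp g.continuous)).mul h.continuous) c p hc hp g h
    intro x
    have hgh : (0:ℝ) ≤ ‖g x‖ * ‖h x‖ := by positivity
    calc ‖r x * conj' (g x) * h x‖ = ‖r x‖ * (‖g x‖ * ‖h x‖) := by
          simp [norm_mul, mul_assoc]
      _ ≤ (c * |x| ^ p) * (‖g x‖ * ‖h x‖) := mul_le_mul_of_nonneg_right (hrb x) hgh
      _ = c * (|x| ^ p * (‖g x‖ * ‖h x‖)) := by ring
  have I1 : Integrable fun x : ℝ => Vc x * conj' (f x) * f2 x :=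
    int_c Vc hcV 1 β (by norm_num) hβ0 f f2 habsV
  have I2 : Integrable fun x : ℝ => V'c x * conj' (f x) * f1 x :=
    int_c V'c hcV' β (β - 1) hβ0 hβ1 f f1 habsV'
  have I3 : Integrable fun x : ℝ => Vc x * conj' (f1 x) * f1 x :=
    int_c Vc hcV 1 β (by norm_num) hβ0 f1 f1 habsV
  have I4 : Integrable fun x : ℝ => Vc x * conj' (f x) * f1 x :=
    int_c Vc hcV 1 β (by norm_num) hβ0 f f1 habsV
  have I5 : Integrable fun x : ℝ => V'c x * conj' (f1 x) * f x :=
    int_c V'c hcV' β (β - 1) hβ0 hβ1 f1 f habsV'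
  have I7 : Integrable fun x : ℝ => Wc x * conj' (f x) * f x :=
    int_c Wc hcW (β * (β - 1)) (β - 2) (by nlinarith) hβ2 f f habsW
  have I8 : Integrable fun x : ℝ => V'c x * conj' (f x) * f x :=
    int_c V'c hcV' β (β - 1) hβ0 hβ1 f f habsV'
  -- derivative facts
  have hgd : ∀ x, HasDerivAt (⇑f) (f1 x) x := fun x => by
    simpa [hd1] using f.differentiableAt.hasDerivAt
  have hgd1 : ∀ x, HasDerivAt (⇑f1) (f2 x) x := fun x => by
    simpa [hd2] using f1.differentiableAt.hasDerivAt
  have hconjd : ∀ x, HasDerivAt (fun y => conj' (f y)) (conj' (f1 x)) x := fun x => by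
    simpa only [starRingEnd_apply] using (hgd x).star
  -- first integration by parts
  have IBP1 : (∫ x : ℝ, Vc x * conj' (f x) * f2 x)
      = - ∫ x : ℝ, (V'c x * conj' (f x) + Vc x * conj' (f1 x)) * f1 x := by
    refine integral_mul_deriv_eq_deriv_mul_of_integrable
      (u := fun x => Vc x * conj' (f x)) (v := ⇑f1)
      (u' := fun x => V'c x * conj' (f x) + Vc x * conj' (f1 x)) (v' := ⇑f2)
      (fun x _ => ?_) (fun x _ => hgd1 x) ?_ ?_ ?_
    · exact ((hasDerivAt_V hβ x).ofReal_comp).mul (hconjd x)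
    · exact I1
    · exact (I2.add I3).congr (Eventually.of_forall fun x => by simp [Pi.mul_apply]; ring)
    · exact I4
  -- second integration by parts
  have IBP2 : (∫ x : ℝ, V'c x * (conj' (f1 x) * f x + conj' (f x) * f1 x))
      = - ∫ x : ℝ, Wc x * (conj' (f x) * f x) := by
    refine integral_mul_deriv_eq_deriv_mul_of_integrable
      (u := V'c) (v := fun x => conj' (f x) * f x)
      (u' := Wc) (v' := fun x => conj' (f1 x) * f x + conj' (f x) * f1 x)
      (fun x _ => (hasDerivAt_V' hβ x).ofReal_comp) (fun x _ => (hconjd x).mul (hgd x)) ?_ ?_ ?_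
    · exact (I5.add I2).congr (Eventually.of_forall fun x => by simp [Pi.mul_apply]; ring)
    · exact I7.congr (Eventually.of_forall fun x => by simp [Pi.mul_apply]; ring)
    · exact I8.congr (Eventually.of_forall fun x => by simp [Pi.mul_apply]; ring)
  -- real parts of the quadratic-form integrals
  have hre3 : ∀ (r : ℝ) (z : ℂ), ((r : ℂ) * conj' z * z).re = r * ‖z‖ ^ 2 := by
    intro r z
    rw [mul_assoc, show conj' z * z = ((Complex.normSq z : ℝ) : ℂ) by
      rw [mul_comm, Complex.mul_conj], ← Complex.ofReal_mul, Complex.ofReal_re,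
      Complex.normSq_eq_norm_sq]
  have hGre : (∫ x : ℝ, Vc x * conj' (f1 x) * f1 x).re = ∫ x : ℝ, |x| ^ β * ‖f1 x‖ ^ 2 := by
    have h := integral_re (𝕜 := ℂ) I3
    simp only [RCLike.re_to_complex] at h
    rw [← h]
    congr 1
    funext x
    exact hre3 (|x| ^ β) (f1 x)
  set FF : ℂ := ∫ x : ℝ, V'c x * conj' (f x) * f1 x with hFFdef
  have h5 : (∫ x : ℝ, V'c x * (conj' (f1 x) * f x + conj' (f x) * f1 x)) = conj' FF + FF := by
    have hptA : ∀ x : ℝ, V'c x * (conj' (f1 x) * f x + conj' (f x) * f1 x)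
        = V'c x * conj' (f1 x) * f x + V'c x * conj' (f x) * f1 x := fun x => by ring
    simp only [hptA]
    rw [integral_add I5 I2]
    congr 1
    have hptB : ∀ x : ℝ, V'c x * conj' (f1 x) * f x = conj' (V'c x * conj' (f x) * f1 x) :=
      fun x => by
        simp only [map_mul, Complex.conj_conj, hV'c, Complex.conj_ofReal]
        ring
    simp only [hptB]
    rw [integral_conj]
  have I7' : Integrable fun x : ℝ => Wc x * (conj' (f x) * f x) :=
    I7.congr (Eventually.of_forall fun x => by ring)
  have h8 : (∫ x : ℝ, Wc x * (conj' (f x) * f x)).re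
      = (β * (β - 1)) * ∫ x : ℝ, |x| ^ (β - 2) * ‖f x‖ ^ 2 := by
    have h := integral_re (𝕜 := ℂ) I7'
    simp only [RCLike.re_to_complex] at h
    rw [← h, ← integral_const_mul]
    congr 1
    funext x
    rw [show Wc x * (conj' (f x) * f x) = ((β * (β - 1) * |x| ^ (β - 2) : ℝ) : ℂ)
        * conj' (f x) * f x by rw [hWc]; ring, hre3]
    ring
  have hFFre : 2 * FF.re = -((β * (β - 1)) * ∫ x : ℝ, |x| ^ (β - 2) * ‖f x‖ ^ 2) := by
    have h6 : conj' FF + FF = - ∫ x : ℝ, Wc x * (conj' (f x) * f x) := h5.symm.trans IBP2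
    have h7 := congrArg Complex.re h6
    simp only [Complex.add_re, Complex.conj_re, Complex.neg_re] at h7
    rw [h8] at h7
    linarith
  have hEE : (∫ x : ℝ, Vc x * conj' (f x) * f2 x)
      = -(FF + ∫ x : ℝ, Vc x * conj' (f1 x) * f1 x) := by
    rw [IBP1]
    congr 1
    have hpt : ∀ x : ℝ, (V'c x * conj' (f x) + Vc x * conj' (f1 x)) * f1 x
        = V'c x * conj' (f x) * f1 x + Vc x * conj' (f1 x) * f1 x := fun x => by ring
    simp only [hpt]
    rw [integral_add I2 I3]
  -- integrability of the real integrands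
  have R1 : Integrable fun x : ℝ => ‖f2 x‖ ^ 2 := by
    apply schwartz_integrable_aux ((f2.continuous.norm).pow 2) 1 0 (by norm_num) le_rfl f2 f2
    intro x
    rw [Real.norm_eq_abs, _root_.abs_of_nonneg (sq_nonneg _), Real.rpow_zero, one_mul, one_mul,
      ← pow_two]
    exact le_rfl
  have R2 : Integrable fun x : ℝ => ‖Vc x * f x‖ ^ 2 := by
    apply schwartz_integrable_aux ((hcV.mul f.continuous).norm.pow 2) 1 (β + β)
      (by norm_num) (by linarith) f f
    intro x
    have hnorm : ‖Vc x * f x‖ = |x| ^ β * ‖f x‖ := by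
      rw [hVc]
      simp [norm_mul, Complex.norm_real, Real.norm_eq_abs,
        _root_.abs_of_nonneg (Real.rpow_nonneg (abs_nonneg x) β)]
    rw [Real.norm_eq_abs, _root_.abs_of_nonneg (sq_nonneg _), Pi.pow_apply, Pi.mul_apply, hnorm, mul_pow]
    have he : (|x| ^ β) ^ 2 = |x| ^ (β + β) := by
      rw [Real.rpow_add' (abs_nonneg x) (by linarith : β + β ≠ 0), pow_two]
    rw [he, one_mul]
    exact le_of_eq (by ring)
  have R3 : Integrable fun x : ℝ => (Vc x * conj' (f x) * f2 x).re := by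
    apply schwartz_integrable_aux
      (Complex.continuous_re.comp ((hcV.mul hconjf).mul f2.continuous)) 1 β (by norm_num) hβ0 f f2
    intro x
    have h1 : ‖(Vc x * conj' (f x) * f2 x).re‖ ≤ ‖Vc x * conj' (f x) * f2 x‖ := by
      rw [Real.norm_eq_abs]
      exact Complex.abs_re_le_norm _
    refine h1.trans ?_
    calc ‖Vc x * conj' (f x) * f2 x‖ = ‖Vc x‖ * (‖f x‖ * ‖f2 x‖) := by
          simp [norm_mul, mul_assoc]
      _ ≤ (1 * |x| ^ β) * (‖f x‖ * ‖f2 x‖) :=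
          mul_le_mul_of_nonneg_right (habsV x) (by positivity)
      _ = 1 * (|x| ^ β * (‖f x‖ * ‖f2 x‖)) := by ring
  -- expansion of the square
  have hmain : (∫ x : ℝ, ‖-(f2 x) + Vc x * f x‖ ^ 2)
      = (∫ x : ℝ, ‖f2 x‖ ^ 2) + (∫ x : ℝ, ‖Vc x * f x‖ ^ 2)
        - 2 * (∫ x : ℝ, Vc x * conj' (f x) * f2 x).re := by
    have hpt : ∀ x : ℝ, ‖-(f2 x) + Vc x * f x‖ ^ 2
        = ‖f2 x‖ ^ 2 + ‖Vc x * f x‖ ^ 2 - 2 * ((Vc x * conj' (f x) * f2 x).re) := by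
      intro x
      rw [norm_neg_add_sq (f2 x) (Vc x * f x)]
      have he : conj' (Vc x * f x) * f2 x = Vc x * conj' (f x) * f2 x := by
        simp only [map_mul, hVc, Complex.conj_ofReal]
      rw [he]
    simp only [hpt]
    have R12 : Integrable fun x : ℝ => ‖f2 x‖ ^ 2 + ‖Vc x * f x‖ ^ 2 := R1.add R2
    have R3' : Integrable fun x : ℝ => 2 * (Vc x * conj' (f x) * f2 x).re := R3.const_mul 2
    rw [integral_sub R12 R3', integral_add R1 R2, integral_const_mul]
    have h := integral_re (𝕜 := ℂ) I1
    simp only [RCLike.re_to_complex] at h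
    rw [h]
  -- final assembly
  show (∫ x : ℝ, ‖-(f2 x) + Vc x * f x‖ ^ 2)
      = (∫ x : ℝ, ‖f2 x‖ ^ 2) + (∫ x : ℝ, ‖Vc x * f x‖ ^ 2)
        + 2 * (∫ x : ℝ, |x| ^ β * ‖f1 x‖ ^ 2)
        - β * (β - 1) * (∫ x : ℝ, |x| ^ (β - 2) * ‖f x‖ ^ 2)
  rw [hmain]
  have hEre : (∫ x : ℝ, Vc x * conj' (f x) * f2 x).re
      = -(FF.re + ∫ x : ℝ, |x| ^ β * ‖f1 x‖ ^ 2) := by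
    rw [hEE]
    simp only [Complex.neg_re, Complex.add_re, hGre]
  rw [hEre]
  linarith [hFFre]
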